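/- The functions I_j = D^j(t_1/(t-1)), i.e. I_j = t_{j+1}/(t_j - 1) for j ≥ 0, are invariants of the vector field X_1 of the discrete Liouville equation: X_1 I_j = 0 for all j ≥ 0. -/

import Mathlib

open Finset

/-- Partial derivative with respect to the variable `t_i`. -/
noncomputable def pd (i : ℕ) (F : (ℕ → ℝ) → ℝ) (t : ℕ → ℝ) : ℝ :=
  deriv (fun s => F (Function.update t i s)) (t i)

/-- Coefficients of `X₁` for the discrete Liouville equation:
`x₀ = 1`, `x_k = ∏_{i=0}^{k-1} t_{i+1}/(t_i - 1)`. -/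
noncomputable def xplus (k : ℕ) : (ℕ → ℝ) → ℝ := fun t => ∏ i ∈ range k, t (i+1) / (t i - 1)

lemma pd_other (j i : ℕ) (t : ℕ → ℝ) (h1 : i ≠ j) (h2 : i ≠ j+1) :
    pd i (fun s => s (j+1) / (s j - 1)) t = 0 := by
  unfold pd
  have : (fun s => (Function.update t i s) (j+1) / ((Function.update t i s) j - 1))
      = fun _ => t (j+1) / (t j - 1) := by
    funext s
    rw [Function.update_of_ne (Ne.symm h2), Function.update_of_ne (Ne.symm h1)]
  rw [this, deriv_const]

lemma pd_j (j : ℕ) (t : ℕ → ℝ) (h : t j ≠ 1) :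
    pd j (fun s => s (j+1) / (s j - 1)) t = -(t (j+1) / (t j - 1)^2) := by
  unfold pd
  have : (fun s => (Function.update t j s) (j+1) / ((Function.update t j s) j - 1))
      = fun s => t (j+1) / (s - 1) := by
    funext s
    rw [Function.update_of_ne (by omega), Function.update_self]
  rw [this]
  have hne : t j - 1 ≠ 0 := sub_ne_zero.mpr h
  have hd : HasDerivAt (fun s : ℝ => t (j+1) / (s - 1)) (-(t (j+1) / (t j - 1)^2)) (t j) := by
    have h1 : HasDerivAt (fun s : ℝ => s - 1) 1 (t j) :=
      (hasDerivAt_id _).sub_const 1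
    have h2 : HasDerivAt (fun s : ℝ => t (j+1) * (s - 1)⁻¹) (t (j+1) * (-1 / (t j - 1)^2)) (t j) :=
      (h1.inv hne).const_mul (t (j+1))
    have heq : (fun s : ℝ => t (j+1) / (s - 1)) = fun s : ℝ => t (j+1) * (s - 1)⁻¹ := by
      funext s; rw [div_eq_mul_inv]
    rw [heq]
    convert h2 using 1
    ring
  exact hd.deriv

lemma pd_j1 (j : ℕ) (t : ℕ → ℝ) :
    pd (j+1) (fun s => s (j+1) / (s j - 1)) t = 1 / (t j - 1) := by
  unfold pd
  have : (fun s => (Function.update t (j+1) s) (j+1) / ((Function.update t (j+1) s) j - 1))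
      = fun s => s / (t j - 1) := by
    funext s
    rw [Function.update_self, Function.update_of_ne (by omega)]
  rw [this]
  have hd : HasDerivAt (fun s : ℝ => s / (t j - 1)) (1 / (t j - 1)) (t (j+1)) := by
    simpa [div_eq_mul_inv, one_mul] using (hasDerivAt_id (t (j+1))).mul_const (t j - 1)⁻¹
  exact hd.deriv

/-- The functions `Iⱼ = Dʲ(t₁/(t-1)) = t_{j+1}/(tⱼ - 1)` are invariants of the
vector field `X₁` of the discrete Liouville equation: `X₁Iⱼ = 0` for `j ≥ 0`
(the sum is finite since `Iⱼ` depends only on `tⱼ, t_{j+1}`). -/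
theorem stmt16 :
    ∀ (j : ℕ) (t : ℕ → ℝ), (∀ k, t k ≠ 1) →
      ∑ i ∈ range (j+2), xplus i t * pd i (fun s => s (j+1) / (s j - 1)) t = 0 := by
  intro j t ht
  rw [show j+2 = (j+1)+1 by ring, Finset.sum_range_succ, Finset.sum_range_succ]
  have hz : ∑ i ∈ range j, xplus i t * pd i (fun s => s (j+1) / (s j - 1)) t = 0 := by
    apply Finset.sum_eq_zero
    intro i hi
    simp only [Finset.mem_range] at hi
    rw [pd_other j i t (by omega) (by omega), mul_zero]
  rw [hz, pd_j j t (ht j), pd_j1 j t]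
  have hx : xplus (j+1) t = xplus j t * (t (j+1) / (t j - 1)) := by
    unfold xplus; rw [Finset.prod_range_succ]
  rw [hx]
  have hne : t j - 1 ≠ 0 := sub_ne_zero.mpr (ht j)
  field_simp
  ring
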